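/- For any fixed δ > 0, lim_{ε → 0+} (1/(ε² log ε)) · ∫_0^δ [exp(-ε/x)·(x + ε) - x] dx = 1/2. -/

import Mathlib

open Filter Set intervalIntegral

lemma rem_bound {ε x : ℝ} (hε : 0 < ε) (hx : ε ≤ x) :
    |Real.exp (-ε/x) * (x+ε) - x + ε^2/2 * x⁻¹| ≤ ε^3 * (x^2)⁻¹ := by
  have hx0 : 0 < x := lt_of_lt_of_le hε hx
  have ht0 : 0 < ε / x := div_pos hε hx0
  have ht1 : ε / x ≤ 1 := (div_le_one hx0).2 hx
  have hR : |Real.exp (-(ε/x)) - (1 - ε/x + (ε/x)^2/2)| ≤ 2/9 * (ε/x)^3 := by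
    have h := Real.exp_bound (x := -(ε/x)) (by rwa [abs_neg, abs_of_pos ht0]) (n := 3)
      (by norm_num)
    rw [abs_neg, abs_of_pos ht0] at h
    norm_num [Finset.sum_range_succ, Nat.factorial] at h
    rw [show (1:ℝ) + -(ε/x) + (ε/x)^2/2 = 1 - ε/x + (ε/x)^2/2 from by ring] at h
    linarith
  have key : Real.exp (-ε/x) * (x+ε) - x + ε^2/2 * x⁻¹
      = (x+ε) * (Real.exp (-(ε/x)) - (1 - ε/x + (ε/x)^2/2)) + ε^3/2 * (x^2)⁻¹ := by
    rw [neg_div]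
    field_simp
    ring
  rw [key]
  have e2 : (2*x) * (2/9 * (ε/x)^3) = 4/9 * (ε^3 * (x^2)⁻¹) := by
    field_simp; ring
  have habs : |(x+ε) * (Real.exp (-(ε/x)) - (1 - ε/x + (ε/x)^2/2))|
      ≤ (2*x) * (2/9 * (ε/x)^3) := by
    rw [abs_mul]
    have h1 : |x+ε| ≤ 2*x := by rw [abs_of_pos (by linarith)]; linarith
    exact mul_le_mul h1 hR (abs_nonneg _) (by linarith)
  calc |(x+ε) * (Real.exp (-(ε/x)) - (1 - ε/x + (ε/x)^2/2)) + ε^3/2 * (x^2)⁻¹|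
      ≤ |(x+ε) * (Real.exp (-(ε/x)) - (1 - ε/x + (ε/x)^2/2))| + |ε^3/2 * (x^2)⁻¹| :=
        abs_add_le _ _
    _ ≤ (2*x) * (2/9 * (ε/x)^3) + ε^3/2 * (x^2)⁻¹ := by
        have : |ε^3/2 * (x^2)⁻¹| = ε^3/2 * (x^2)⁻¹ := abs_of_pos (by positivity)
        linarith
    _ ≤ ε^3 * (x^2)⁻¹ := by
        rw [e2]
        have : (0:ℝ) < ε^3 * (x^2)⁻¹ := by positivity
        linarith

lemma key_est {δ ε : ℝ} (hε : 0 < ε) (hεδ : ε < δ) :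
    |(∫ x in (0:ℝ)..δ, (Real.exp (-ε / x) * (x + ε) - x))
      - ε^2/2 * (Real.log ε - Real.log δ)| ≤ 4 * ε^2 := by
  have hδ : 0 < δ := hε.trans hεδ
  set f : ℝ → ℝ := fun x => Real.exp (-ε / x) * (x + ε) - x with hf
  -- continuity away from 0
  have hcont : ContinuousOn f {x : ℝ | 0 < x} := by
    apply ContinuousOn.sub
    · exact ((Real.continuous_exp.comp_continuousOn
        (continuousOn_const.div continuousOn_id (fun x hx => ne_of_gt hx))).mul
        (continuousOn_id.add continuousOn_const))
    · exact continuousOn_id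
  have int2 : IntervalIntegrable f MeasureTheory.volume ε δ := by
    apply ContinuousOn.intervalIntegrable
    apply hcont.mono
    rw [uIcc_of_le hεδ.le]
    intro x hx
    exact lt_of_lt_of_le hε hx.1
  have bdd : ∀ x ∈ Ioc (0:ℝ) ε, ‖f x‖ ≤ 3 * ε := by
    intro x hx
    have hx0 : 0 < x := hx.1
    have hexp : Real.exp (-ε / x) ≤ 1 := by
      apply Real.exp_le_one_iff.2
      apply div_nonpos_of_nonpos_of_nonneg (by linarith) hx0.le
    have h1 : |Real.exp (-ε / x) * (x + ε) - x| ≤ Real.exp (-ε/x) * (x+ε) + x := by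
      refine (abs_sub _ _).trans ?_
      rw [abs_of_nonneg (by positivity), abs_of_nonneg hx0.le]
    have h2 : Real.exp (-ε/x) * (x+ε) ≤ x + ε := by
      nlinarith [Real.exp_pos (-ε/x)]
    calc ‖f x‖ ≤ Real.exp (-ε/x) * (x+ε) + x := h1
      _ ≤ (x + ε) + x := by linarith
      _ ≤ 3 * ε := by linarith [hx.2]
  have int1 : IntervalIntegrable f MeasureTheory.volume 0 ε := by
    rw [intervalIntegrable_iff_integrableOn_Ioc_of_le hε.le]
    apply MeasureTheory.Measure.integrableOn_of_bounded (M := 3*ε)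
    · simp
    · apply Measurable.aestronglyMeasurable
      exact ((Real.measurable_exp.comp (measurable_const.div measurable_id)).mul
        (measurable_id.add measurable_const)).sub measurable_id
    · exact (MeasureTheory.ae_restrict_iff' measurableSet_Ioc).2
        (MeasureTheory.ae_of_all _ bdd)
  have split : (∫ x in (0:ℝ)..ε, f x) + ∫ x in ε..δ, f x = ∫ x in (0:ℝ)..δ, f x :=
    intervalIntegral.integral_add_adjacent_intervals int1 int2
  have b1 : ‖∫ x in (0:ℝ)..ε, f x‖ ≤ 3 * ε * |ε - 0| := by
    apply intervalIntegral.norm_integral_le_of_norm_le_const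
    intro x hx
    rw [uIoc_of_le hε.le] at hx
    exact bdd x hx
  rw [sub_zero, abs_of_nonneg hε.le] at b1
  -- the inverse part
  have intinv : IntervalIntegrable (fun x : ℝ => ε^2/2 * x⁻¹) MeasureTheory.volume ε δ := by
    apply ContinuousOn.intervalIntegrable
    apply ContinuousOn.mul continuousOn_const
    apply ContinuousOn.inv₀ continuousOn_id
    rw [uIcc_of_le hεδ.le]
    intro x hx
    exact ne_of_gt (lt_of_lt_of_le hε hx.1)
  set r : ℝ → ℝ := fun x => f x + ε^2/2 * x⁻¹ with hr
  have intr : IntervalIntegrable r MeasureTheory.volume ε δ := int2.add intinv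
  have eqr : ∫ x in ε..δ, r x = (∫ x in ε..δ, f x) + ∫ x in ε..δ, ε^2/2 * x⁻¹ :=
    intervalIntegral.integral_add int2 intinv
  have einv : ∫ x in ε..δ, ε^2/2 * x⁻¹ = ε^2/2 * (Real.log δ - Real.log ε) := by
    rw [intervalIntegral.integral_const_mul, integral_inv_of_pos hε hδ,
      Real.log_div (ne_of_gt hδ) (ne_of_gt hε)]
  -- bound on ∫ r
  have intsq : IntervalIntegrable (fun x : ℝ => ε^3 * (x^2)⁻¹) MeasureTheory.volume ε δ := by
    apply ContinuousOn.intervalIntegrable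
    apply ContinuousOn.mul continuousOn_const
    apply ContinuousOn.inv₀ (continuousOn_pow 2)
    rw [uIcc_of_le hεδ.le]
    intro x hx
    exact ne_of_gt (pow_pos (lt_of_lt_of_le hε hx.1) 2)
  have esq : ∫ x in ε..δ, ε^3 * (x^2)⁻¹ = ε^3 * (ε⁻¹ - δ⁻¹) := by
    rw [intervalIntegral.integral_const_mul]
    have : ∫ x in ε..δ, (x^2)⁻¹ = -δ⁻¹ - -ε⁻¹ := by
      apply intervalIntegral.integral_eq_sub_of_hasDerivAt
      · intro x hx
        rw [uIcc_of_le hεδ.le] at hx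
        have hx0 : x ≠ 0 := ne_of_gt (lt_of_lt_of_le hε hx.1)
        have h := (hasDerivAt_inv hx0).neg
        rw [neg_neg] at h
        exact h
      · apply ContinuousOn.intervalIntegrable
        apply ContinuousOn.inv₀ (continuousOn_pow 2)
        rw [uIcc_of_le hεδ.le]
        intro x hx
        exact ne_of_gt (pow_pos (lt_of_lt_of_le hε hx.1) 2)
    rw [this]; ring
  have b2 : ‖∫ x in ε..δ, r x‖ ≤ |∫ x in ε..δ, ε^3 * (x^2)⁻¹| := by
    apply intervalIntegral.norm_integral_le_abs_of_norm_le _ intsq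
    apply (MeasureTheory.ae_restrict_iff' measurableSet_uIoc).2
    apply MeasureTheory.ae_of_all
    intro x hx
    rw [uIoc_of_le hεδ.le] at hx
    exact rem_bound hε hx.1.le
  rw [esq] at b2
  have hinv : δ⁻¹ ≤ ε⁻¹ := by
    apply inv_anti₀ hε hεδ.le
  have hb2' : |ε^3 * (ε⁻¹ - δ⁻¹)| ≤ ε^2 := by
    rw [abs_of_nonneg (mul_nonneg (pow_pos hε 3).le (sub_nonneg.2 hinv))]
    have h1 : ε^3 * (ε⁻¹ - δ⁻¹) ≤ ε^3 * ε⁻¹ := by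
      apply mul_le_mul_of_nonneg_left _ (pow_pos hε 3).le
      linarith [inv_pos.2 hδ]
    have h2 : ε^3 * ε⁻¹ = ε^2 := by
      field_simp
    linarith
  rw [einv] at eqr
  have final : (∫ x in (0:ℝ)..δ, f x) - ε^2/2 * (Real.log ε - Real.log δ)
      = (∫ x in (0:ℝ)..ε, f x) + ∫ x in ε..δ, r x := by
    rw [← split]; linarith
  rw [show |(∫ x in (0:ℝ)..δ, f x) - ε^2/2 * (Real.log ε - Real.log δ)|
      = |(∫ x in (0:ℝ)..ε, f x) + ∫ x in ε..δ, r x| from by rw [final]]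
  calc |(∫ x in (0:ℝ)..ε, f x) + ∫ x in ε..δ, r x|
      ≤ |∫ x in (0:ℝ)..ε, f x| + |∫ x in ε..δ, r x| := abs_add_le _ _
    _ ≤ 3 * ε * ε + ε^2 := by
        have n1 : |∫ x in (0:ℝ)..ε, f x| ≤ 3 * ε * ε := by
          rw [← Real.norm_eq_abs]; exact b1
        have n2 : |∫ x in ε..δ, r x| ≤ ε^2 := by
          rw [← Real.norm_eq_abs]; exact b2.trans hb2'
        linarith
    _ ≤ 4 * ε^2 := by nlinarith

theorem tail_integral_limit_two (δ : ℝ) (hδ : 0 < δ) :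
    Tendsto (fun ε : ℝ => (1 / (ε ^ 2 * Real.log ε)) *
        ∫ x in (0:ℝ)..δ, (Real.exp (-ε / x) * (x + ε) - x))
      (nhdsWithin 0 (Ioi (0:ℝ))) (nhds (1/2)) := by
  set F : ℝ → ℝ := fun ε : ℝ => (1 / (ε ^ 2 * Real.log ε)) *
        ∫ x in (0:ℝ)..δ, (Real.exp (-ε / x) * (x + ε) - x) with hF
  set g : ℝ → ℝ := fun ε => 1/2 - Real.log δ / (2 * Real.log ε) with hg
  have hlog : Tendsto Real.log (nhdsWithin 0 (Ioi (0:ℝ))) atBot :=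
    Real.tendsto_log_nhdsGT_zero
  have hneglog : Tendsto (fun ε : ℝ => -Real.log ε) (nhdsWithin 0 (Ioi (0:ℝ))) atTop :=
    tendsto_neg_atBot_atTop.comp hlog
  have hgten : Tendsto g (nhdsWithin 0 (Ioi (0:ℝ))) (nhds (1/2)) := by
    have h1 : Tendsto (fun ε : ℝ => Real.log δ / (2 * Real.log ε))
        (nhdsWithin 0 (Ioi (0:ℝ))) (nhds 0) := by
      have h2 : Tendsto (fun ε : ℝ => -(Real.log δ / (2 * (-Real.log ε))))
          (nhdsWithin 0 (Ioi (0:ℝ))) (nhds (-0)) := by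
        apply Tendsto.neg
        apply Tendsto.div_atTop (tendsto_const_nhds)
        exact (tendsto_const_mul_atTop_of_pos (by norm_num : (0:ℝ) < 2)).2 hneglog
      rw [neg_zero] at h2
      apply h2.congr
      intro ε
      rw [mul_neg, div_neg, neg_neg]
    have h3 := tendsto_const_nhds (x := (1:ℝ)/2) (f := nhdsWithin 0 (Ioi (0:ℝ))) |>.sub h1
    rw [sub_zero] at h3
    exact h3
  have hmem : Ioo (0:ℝ) (min δ 1) ∈ nhdsWithin 0 (Ioi (0:ℝ)) :=
    Ioo_mem_nhdsGT_of_mem (by simp [lt_min hδ one_pos, le_refl])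
  have hdiff : Tendsto (fun ε => F ε - g ε) (nhdsWithin 0 (Ioi (0:ℝ))) (nhds 0) := by
    apply squeeze_zero_norm' (a := fun ε : ℝ => 4 / (-Real.log ε))
    · filter_upwards [hmem] with ε hε
      obtain ⟨hε0, hεm⟩ := hε
      have hεδ : ε < δ := hεm.trans_le (min_le_left _ _)
      have hε1 : ε < 1 := hεm.trans_le (min_le_right _ _)
      have hlogneg : Real.log ε < 0 := Real.log_neg hε0 hε1
      have hkey := key_est hε0 hεδ
      have heq : F ε - g ε = (1 / (ε ^ 2 * Real.log ε)) *
          ((∫ x in (0:ℝ)..δ, (Real.exp (-ε / x) * (x + ε) - x))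
            - ε^2/2 * (Real.log ε - Real.log δ)) := by
        rw [hF, hg]
        have hne1 : (ε:ℝ) ≠ 0 := hε0.ne'
        have hne2 : Real.log ε ≠ 0 := ne_of_lt hlogneg
        have h1 : (1 / (ε ^ 2 * Real.log ε)) * (ε^2/2 * (Real.log ε - Real.log δ))
            = 1/2 - Real.log δ / (2 * Real.log ε) := by
          field_simp
        rw [mul_sub, h1]
      rw [Real.norm_eq_abs, heq, abs_mul]
      have habs1 : |1 / (ε ^ 2 * Real.log ε)| = 1 / (ε^2 * (-Real.log ε)) := by
        rw [abs_div, abs_one, abs_mul, abs_of_pos (by positivity : (0:ℝ) < ε^2),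
          abs_of_neg hlogneg]
      rw [habs1]
      calc 1 / (ε^2 * (-Real.log ε)) * |_| ≤ 1 / (ε^2 * (-Real.log ε)) * (4 * ε^2) := by
            apply mul_le_mul_of_nonneg_left hkey
            exact (div_pos one_pos (mul_pos (pow_pos hε0 2) (neg_pos.2 hlogneg))).le
        _ = 4 / (-Real.log ε) := by
            have hne1 : (ε:ℝ) ≠ 0 := hε0.ne'
            have hne2 : -Real.log ε ≠ 0 := ne_of_gt (neg_pos.2 hlogneg)
            have hne3 : Real.log ε ≠ 0 := ne_of_lt hlogneg
            field_simp
    · exact Tendsto.div_atTop tendsto_const_nhds hneglog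
  have : Tendsto (fun ε => g ε + (F ε - g ε)) (nhdsWithin 0 (Ioi (0:ℝ)))
      (nhds (1/2 + 0)) := hgten.add hdiff
  rw [add_zero] at this
  apply this.congr
  intro ε
  ring
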